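/- In a compact Hausdorff topological group H, for any two downward-directed families (A_i)_{i∈I} and (B_j)_{j∈J} of nonempty closed subsets, ⋂_{i,j} closure(A_i · B_j) = (⋂_i A_i) · (⋂_j B_j). -/

import Mathlib

open Pointwise

/-- In a compact Hausdorff topological group, for downward-directed families of nonempty
closed subsets, `⋂_{i,j} closure (Aᵢ · Bⱼ) = (⋂ᵢ Aᵢ) · (⋂ⱼ Bⱼ)`. -/
theorem stmt_14 {H : Type*} [Group H] [TopologicalSpace H] [IsTopologicalGroup H]
    [CompactSpace H] [T2Space H] {ι κ : Type*}
    (A : ι → Set H) (B : κ → Set H)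
    (hAne : ∀ i, (A i).Nonempty) (hAcl : ∀ i, IsClosed (A i))
    (hBne : ∀ j, (B j).Nonempty) (hBcl : ∀ j, IsClosed (B j))
    (hAdir : ∀ i i', ∃ i'', A i'' ⊆ A i ∧ A i'' ⊆ A i')
    (hBdir : ∀ j j', ∃ j'', B j'' ⊆ B j ∧ B j'' ⊆ B j') :
    (⋂ i, ⋂ j, closure (A i * B j)) = (⋂ i, A i) * (⋂ j, B j) := by
  have hABcl : ∀ i j, IsClosed (A i * B j) := fun i j =>
    ((hAcl i).isCompact.mul (hBcl j).isCompact).isClosed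
  have hclos : ∀ i j, closure (A i * B j) = A i * B j := fun i j => (hABcl i j).closure_eq
  -- nonempty intersections (when index types are nonempty)
  have hAint : Nonempty ι → (⋂ i, A i).Nonempty := by
    intro h
    exact IsCompact.nonempty_iInter_of_directed_nonempty_isCompact_isClosed A
      (fun i i' => (hAdir i i').imp fun k hk => ⟨hk.1, hk.2⟩) hAne
      (fun i => (hAcl i).isCompact) hAcl
  have hBint : Nonempty κ → (⋂ j, B j).Nonempty := by
    intro h
    exact IsCompact.nonempty_iInter_of_directed_nonempty_isCompact_isClosed B
      (fun j j' => (hBdir j j').imp fun k hk => ⟨hk.1, hk.2⟩) hBne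
      (fun j => (hBcl j).isCompact) hBcl
  rcases isEmpty_or_nonempty ι with hι | hι
  · rcases isEmpty_or_nonempty κ with hκ | hκ
    · simp [Set.iInter_of_empty]
    · rw [Set.iInter_of_empty, Set.iInter_of_empty, Set.univ_mul (hBint hκ)]
  rcases isEmpty_or_nonempty κ with hκ | hκ
  · simp only [Set.iInter_of_empty]
    rw [Set.mul_univ (hAint hι)]
    exact Set.iInter_eq_univ.2 fun i => rfl
  · ext x
    constructor
    · intro hx
      simp only [Set.mem_iInter] at hx
      set C : ι × κ → Set H := fun p => A p.1 ∩ ((x * ·) '' (B p.2)⁻¹) with hC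
      have hCcl : ∀ p, IsClosed (C p) := by
        intro p
        refine (hAcl p.1).inter ?_
        have : IsClosed ((B p.2)⁻¹) := (hBcl p.2).inv
        simpa using (Homeomorph.mulLeft x).isClosedMap _ this
      have hCne : ∀ p, (C p).Nonempty := by
        rintro ⟨i, j⟩
        have := hx i j
        rw [hclos i j] at this
        rcases this with ⟨a, ha, b, hb, hab⟩
        refine ⟨a, ha, b⁻¹, Set.inv_mem_inv.2 hb, ?_⟩
        rw [← hab]; group
      have hCdir : Directed (· ⊇ ·) C := by
        rintro ⟨i, j⟩ ⟨i', j'⟩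
        obtain ⟨i'', hi1, hi2⟩ := hAdir i i'
        obtain ⟨j'', hj1, hj2⟩ := hBdir j j'
        exact ⟨(i'', j''),
          Set.inter_subset_inter hi1 (Set.image_mono (Set.inv_subset_inv.2 hj1)),
          Set.inter_subset_inter hi2 (Set.image_mono (Set.inv_subset_inv.2 hj2))⟩
      obtain ⟨a, ha⟩ := IsCompact.nonempty_iInter_of_directed_nonempty_isCompact_isClosed C
        hCdir hCne (fun p => (hCcl p).isCompact) hCcl
      simp only [Set.mem_iInter] at ha
      refine ⟨a, Set.mem_iInter.2 fun i => (ha (i, Classical.arbitrary κ)).1,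
        a⁻¹ * x, Set.mem_iInter.2 fun j => ?_, by group⟩
      obtain ⟨-, b, hb, hba⟩ := ha (Classical.arbitrary ι, j)
      have : a⁻¹ * x = b⁻¹ := by rw [← hba]; group
      rw [this]
      simpa using hb
    · rintro ⟨a, ha, b, hb, rfl⟩
      simp only [Set.mem_iInter] at ha hb ⊢
      intro i j
      exact subset_closure ⟨a, ha i, b, hb j, rfl⟩
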